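/- Define sequences (u_k), (v_k) by u_0 = 1, v_{k+1} = (1/6)(2·8^k − 3·4^k + 2^k), and u_{k+1} = 5 u_k + v_{k+1}. Then for all k ≥ 0, u_k = (1/18)(2·8^k + 8·5^k + 9·4^k − 2^k). -/
import Mathlib

theorem cum_a_formula (u v : ℕ → ℚ)
    (hu0 : u 0 = 1)
    (hv : ∀ k : ℕ, v (k + 1) = (2 * 8 ^ k - 3 * 4 ^ k + 2 ^ k) / 6)
    (hu : ∀ k : ℕ, u (k + 1) = 5 * u k + v (k + 1)) :
    ∀ k : ℕ, u k = (2 * 8 ^ k + 8 * 5 ^ k + 9 * 4 ^ k - 2 ^ k) / 18 := by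
  intro k
  induction k with
  | zero => rw [hu0]; norm_num
  | succ n ih => rw [hu n, hv n, ih]; ring
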